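/- arXiv:1611.09293 — 3 statements merged into one kernel-verified Lean document; each statement's English description precedes it below -/
import Mathlib

section
/- (Gauss–Markov theorem) Let x : Ω → ℝ^M and z : Ω → ℝ^I be square-integrable random vectors with covariance matrices C_{xz} and C_z, and assume C_z is invertible. Set K := C_{xz} C_z^{-1} (the Kálmán gain) and a := E[x] − K E[z]. Then the affine map ζ ↦ K ζ + a is the minimum mean square error affine estimator of x from z: for every matrix L ∈ ℝ^{M×I} and every vector b ∈ ℝ^M, E[‖x − (K z + a)‖²] ≤ E[‖x − (L z + b)‖²], where ‖·‖ is the Euclidean norm on ℝ^M. -/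
open MeasureTheory Matrix

/-- The covariance matrix of two square-integrable random vectors:
`(C_{xz})_{m i} = E[(x_m − E[x_m])(z_i − E[z_i])]`. -/
noncomputable def covMatrix {Ω : Type*} [MeasurableSpace Ω] (ℙ : Measure Ω)
    {M I : ℕ} (x : Ω → Fin M → ℝ) (z : Ω → Fin I → ℝ) : Matrix (Fin M) (Fin I) ℝ :=
  Matrix.of fun m i =>
    ∫ ω, (x ω m - ∫ ω', x ω' m ∂ℙ) * (z ω i - ∫ ω', z ω' i ∂ℙ) ∂ℙ

private lemma memLp_mul_integrable {Ω : Type*} [MeasurableSpace Ω] {ℙ : Measure Ω}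
    {f g : Ω → ℝ} (hf : MemLp f 2 ℙ) (hg : MemLp g 2 ℙ) :
    Integrable (fun ω => f ω * g ω) ℙ := by
  have h := hg.smul (p := 2) (r := 1) hf
  rw [memLp_one_iff_integrable] at h
  exact h

/-- Gauss–Markov theorem: the affine map given by the Kálmán gain `K = C_{xz} C_z⁻¹`
and offset `a = E[x] − K E[z]` is the minimum mean square error affine estimator
of `x` from `z`. -/
theorem gauss_markov
    {Ω : Type*} [MeasurableSpace Ω] (ℙ : Measure Ω) [IsProbabilityMeasure ℙ]
    {M I : ℕ} (x : Ω → Fin M → ℝ) (z : Ω → Fin I → ℝ)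
    (hx : ∀ m, MemLp (fun ω => x ω m) 2 ℙ) (hz : ∀ i, MemLp (fun ω => z ω i) 2 ℙ)
    (hCz : IsUnit (covMatrix ℙ z z))
    (K : Matrix (Fin M) (Fin I) ℝ) (hK : K = covMatrix ℙ x z * (covMatrix ℙ z z)⁻¹)
    (a : Fin M → ℝ)
    (ha : a = (fun m => ∫ ω, x ω m ∂ℙ) - K.mulVec (fun i => ∫ ω, z ω i ∂ℙ)) :
    ∀ (L : Matrix (Fin M) (Fin I) ℝ) (b : Fin M → ℝ),
      ∫ ω, ∑ m, (x ω m - (K.mulVec (z ω) + a) m) ^ 2 ∂ℙ ≤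
        ∫ ω, ∑ m, (x ω m - (L.mulVec (z ω) + b) m) ^ 2 ∂ℙ := by
  intro L b
  set x' : Fin M → ℝ := fun m => ∫ ω, x ω m ∂ℙ with hx'
  set z' : Fin I → ℝ := fun i => ∫ ω, z ω i ∂ℙ with hz'
  -- centered variables
  set xc : Fin M → Ω → ℝ := fun m ω => x ω m - x' m with hxcdef
  set zc : Fin I → Ω → ℝ := fun i ω => z ω i - z' i with hzcdef
  have hxc : ∀ m, MemLp (xc m) 2 ℙ := fun m => (hx m).sub (memLp_const _)
  have hzc : ∀ i, MemLp (zc i) 2 ℙ := fun i => (hz i).sub (memLp_const _)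
  have hzc_int : ∀ i, Integrable (zc i) ℙ := fun i => ((hzc i).integrable one_le_two)
  have hxc_int : ∀ m, Integrable (xc m) ℙ := fun m => ((hxc m).integrable one_le_two)
  have hzc_mean : ∀ i, ∫ ω, zc i ω ∂ℙ = 0 := by
    intro i
    simp only [hzcdef]
    rw [integral_sub ((hz i).integrable one_le_two) (integrable_const _)]
    simp [hz']
  have hxc_mean : ∀ m, ∫ ω, xc m ω ∂ℙ = 0 := by
    intro m
    simp only [hxcdef]
    rw [integral_sub ((hx m).integrable one_le_two) (integrable_const _)]
    simp [hx']
  -- the residual u and the perturbation v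
  set u : Fin M → Ω → ℝ := fun m ω => xc m ω - ∑ i, K m i * zc i ω with hudef
  set c : Fin M → ℝ := fun m => x' m - (L.mulVec z') m - b m with hcdef
  set v : Fin M → Ω → ℝ := fun m ω => ∑ i, (K m i - L m i) * zc i ω + c m with hvdef
  have hsumK : ∀ m, MemLp (fun ω => ∑ i, K m i * zc i ω) 2 ℙ := fun m =>
    memLp_finset_sum _ (fun i _ => (hzc i).const_mul _)
  have hu : ∀ m, MemLp (u m) 2 ℙ := fun m => (hxc m).sub (hsumK m)
  have hv : ∀ m, MemLp (v m) 2 ℙ := fun m =>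
    (memLp_finset_sum _ (fun i _ => (hzc i).const_mul _)).add (memLp_const _)
  have hu_int : ∀ m, Integrable (u m) ℙ := fun m => (hu m).integrable one_le_two
  have hu_mean : ∀ m, ∫ ω, u m ω ∂ℙ = 0 := by
    intro m
    simp only [hudef]
    rw [integral_sub (hxc_int m) (integrable_finset_sum _ fun i _ => (hzc_int i).const_mul _),
      integral_finset_sum _ fun i _ => (hzc_int i).const_mul _, hxc_mean]
    simp [integral_const_mul, hzc_mean]
  -- K * C_z = C_{xz}
  have hKC : K * covMatrix ℙ z z = covMatrix ℙ x z := by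
    rw [hK, Matrix.mul_assoc,
      Matrix.nonsing_inv_mul _ ((Matrix.isUnit_iff_isUnit_det _).mp hCz), Matrix.mul_one]
  -- orthogonality of u to zc
  have horthz : ∀ m i, ∫ ω, u m ω * zc i ω ∂ℙ = 0 := by
    intro m i
    have h1 : ∀ ω, u m ω * zc i ω =
        xc m ω * zc i ω - ∑ j, K m j * (zc j ω * zc i ω) := by
      intro ω
      simp only [hudef, sub_mul, Finset.sum_mul, mul_assoc]
    simp only [h1]
    rw [integral_sub (memLp_mul_integrable (hxc m) (hzc i))
        (integrable_finset_sum _ fun j _ =>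
          (memLp_mul_integrable (hzc j) (hzc i)).const_mul _),
      integral_finset_sum _ fun j _ =>
        (memLp_mul_integrable (hzc j) (hzc i)).const_mul _]
    simp only [integral_const_mul]
    have h2 : (∫ ω, xc m ω * zc i ω ∂ℙ) = covMatrix ℙ x z m i := rfl
    have h3 : ∀ j, (∫ ω, zc j ω * zc i ω ∂ℙ) = covMatrix ℙ z z j i := fun j => rfl
    simp only [h2, h3]
    have : (K * covMatrix ℙ z z) m i = covMatrix ℙ x z m i := by rw [hKC]
    rw [Matrix.mul_apply] at this
    linarith [this]
  -- orthogonality of u to v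
  have horth : ∀ m, ∫ ω, u m ω * v m ω ∂ℙ = 0 := by
    intro m
    have h1 : ∀ ω, u m ω * v m ω =
        (∑ i, (K m i - L m i) * (u m ω * zc i ω)) + c m * u m ω := by
      intro ω
      simp only [hvdef]
      rw [mul_add, Finset.mul_sum]
      congr 1
      · exact Finset.sum_congr rfl fun i _ => by ring
      · ring
    simp only [h1]
    rw [integral_add (integrable_finset_sum _ fun i _ =>
          (memLp_mul_integrable (hu m) (hzc i)).const_mul _)
        ((hu_int m).const_mul _),
      integral_finset_sum _ fun i _ => (memLp_mul_integrable (hu m) (hzc i)).const_mul _]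
    simp [integral_const_mul, horthz, hu_mean]
  -- pointwise decompositions
  have hKpt : ∀ ω m, x ω m - (K.mulVec (z ω) + a) m = u m ω := by
    intro ω m
    simp only [hudef, hxcdef, hzcdef, ha, Matrix.mulVec, dotProduct, Pi.add_apply,
      Pi.sub_apply, mul_sub, Finset.sum_sub_distrib]
    ring
  have hLpt : ∀ ω m, x ω m - (L.mulVec (z ω) + b) m = u m ω + v m ω := by
    intro ω m
    simp only [hudef, hvdef, hcdef, hxcdef, hzcdef, Matrix.mulVec, dotProduct,
      Pi.add_apply, mul_sub, sub_mul, Finset.sum_sub_distrib]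
    ring
  -- integrability of the squares and cross terms
  have hWint : ∀ m, Integrable (fun ω => u m ω * v m ω) ℙ := fun m =>
    memLp_mul_integrable (hu m) (hv m)
  have husq : ∀ m, Integrable (fun ω => u m ω ^ 2) ℙ := fun m => (hu m).integrable_sq
  have hvsq : ∀ m, Integrable (fun ω => v m ω ^ 2) ℙ := fun m => (hv m).integrable_sq
  -- final computation
  have Hu2 : Integrable (fun ω => ∑ m, u m ω ^ 2) ℙ :=
    integrable_finset_sum _ fun m _ => husq m
  have Hcr : Integrable (fun ω => ∑ m, 2 * (u m ω * v m ω)) ℙ :=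
    integrable_finset_sum _ fun m _ => (hWint m).const_mul 2
  have Hv2 : Integrable (fun ω => ∑ m, v m ω ^ 2) ℙ :=
    integrable_finset_sum _ fun m _ => hvsq m
  have hgoalL : ∫ ω, ∑ m, (x ω m - (L.mulVec (z ω) + b) m) ^ 2 ∂ℙ =
      (∫ ω, ∑ m, u m ω ^ 2 ∂ℙ) + ((∫ ω, ∑ m, 2 * (u m ω * v m ω) ∂ℙ)
        + ∫ ω, ∑ m, v m ω ^ 2 ∂ℙ) := by
    have hfun : (fun ω => ∑ m, (x ω m - (L.mulVec (z ω) + b) m) ^ 2)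
        = fun ω => (∑ m, u m ω ^ 2) +
          ((∑ m, 2 * (u m ω * v m ω)) + ∑ m, v m ω ^ 2) := by
      funext ω
      rw [← Finset.sum_add_distrib, ← Finset.sum_add_distrib]
      exact Finset.sum_congr rfl fun m _ => by rw [hLpt ω m]; ring
    have Hcrv : Integrable
        (fun ω => (∑ m, 2 * (u m ω * v m ω)) + ∑ m, v m ω ^ 2) ℙ := Hcr.add Hv2
    rw [hfun, integral_add Hu2 Hcrv, integral_add Hcr Hv2]
  have hcross : ∫ ω, ∑ m, 2 * (u m ω * v m ω) ∂ℙ = 0 := by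
    rw [integral_finset_sum _ fun m _ => (hWint m).const_mul 2]
    simp [integral_const_mul, horth]
  have hgoalK : ∫ ω, ∑ m, (x ω m - (K.mulVec (z ω) + a) m) ^ 2 ∂ℙ =
      ∫ ω, ∑ m, u m ω ^ 2 ∂ℙ := by
    congr 1
    funext ω
    exact Finset.sum_congr rfl fun m _ => by rw [hKpt ω m]
  rw [hgoalK, hgoalL, hcross, zero_add]
  have : 0 ≤ ∫ ω, ∑ m, v m ω ^ 2 ∂ℙ :=
    integral_nonneg fun ω => Finset.sum_nonneg fun m _ => sq_nonneg _
  linarith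
end

section
/- (Kálmán's covariance formula) Let x_f : Ω → ℝ^M and z : Ω → ℝ^I be square-integrable random vectors with covariance matrices C_{x_f z}, C_{x_f}, and C_z, and assume C_z is invertible. Fix an observation ŷ ∈ ℝ^I, set K := C_{x_f z} C_z^{-1}, and define the assimilated random vector x_a(ω) := x_f(ω) + K(ŷ − z(ω)). Then the covariance matrix of x_a is C_{x_a} = C_{x_f} − C_{x_f z} C_z^{-1} C_{x_f z}ᵀ = C_{x_f} − K C_{x_f z}ᵀ. -/
open MeasureTheory Matrix

section Aux

variable {Ω : Type*} [MeasurableSpace Ω] {μ : Measure Ω}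

lemma integrable_mul_of_memℒp_two {f g : Ω → ℝ}
    (hf : MemLp f 2 μ) (hg : MemLp g 2 μ) : Integrable (fun ω => f ω * g ω) μ := by
  have h : MemLp (f • g) 1 μ := by
    haveI : ENNReal.HolderTriple 2 2 1 := ⟨by rw [ENNReal.inv_two_add_inv_two, inv_one]⟩
    exact hg.smul hf
  exact memLp_one_iff_integrable.mp h

/-- Scalar covariance. -/
noncomputable def covFun (μ : Measure Ω) (f g : Ω → ℝ) : ℝ :=
  ∫ ω, (f ω - ∫ ω', f ω' ∂μ) * (g ω - ∫ ω', g ω' ∂μ) ∂μ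

lemma covFun_comm (f g : Ω → ℝ) : covFun μ f g = covFun μ g f := by
  unfold covFun; congr 1; funext ω; ring

lemma covFun_add_left [IsFiniteMeasure μ] {f₁ f₂ g : Ω → ℝ} (hf₁ : MemLp f₁ 2 μ) (hf₂ : MemLp f₂ 2 μ)
    (hg : MemLp g 2 μ) :
    covFun μ (f₁ + f₂) g = covFun μ f₁ g + covFun μ f₂ g := by
  have hi₁ : Integrable f₁ μ := hf₁.integrable one_le_two
  have hi₂ : Integrable f₂ μ := hf₂.integrable one_le_two
  unfold covFun
  have hpt : ∀ ω, ((f₁ + f₂) ω - ∫ ω', (f₁ + f₂) ω' ∂μ) *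
      (g ω - ∫ ω', g ω' ∂μ) =
      (f₁ ω - ∫ ω', f₁ ω' ∂μ) * (g ω - ∫ ω', g ω' ∂μ) +
      (f₂ ω - ∫ ω', f₂ ω' ∂μ) * (g ω - ∫ ω', g ω' ∂μ) := by
    intro ω
    simp only [Pi.add_apply, integral_add hi₁ hi₂]
    ring
  simp_rw [hpt]
  exact integral_add
    (integrable_mul_of_memℒp_two (hf₁.sub (memLp_const _)) (hg.sub (memLp_const _)))
    (integrable_mul_of_memℒp_two (hf₂.sub (memLp_const _)) (hg.sub (memLp_const _)))

lemma covFun_const_mul (c : ℝ) (f g : Ω → ℝ) :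
    covFun μ (fun ω => c * f ω) g = c * covFun μ f g := by
  unfold covFun
  rw [← integral_const_mul]
  congr 1; funext ω
  rw [integral_const_mul]
  ring

lemma covFun_const [IsProbabilityMeasure μ] (c : ℝ) (g : Ω → ℝ) :
    covFun μ (fun _ => c) g = 0 := by
  simp [covFun]

lemma covFun_affine [IsProbabilityMeasure μ] (c d : ℝ) {f g : Ω → ℝ}
    (hf : MemLp f 2 μ) (hg : MemLp g 2 μ) :
    covFun μ (fun ω => c * f ω + d) g = c * covFun μ f g := by
  have h : (fun ω => c * f ω + d) = (fun ω => c * f ω) + (fun _ => d) := rfl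
  rw [h, covFun_add_left (hf.const_mul c) (memLp_const d) hg, covFun_const,
    covFun_const_mul, add_zero]

lemma covFun_sum_left [IsProbabilityMeasure μ] {ι : Type*} (s : Finset ι)
    {f : ι → Ω → ℝ} {g : Ω → ℝ} (hf : ∀ i ∈ s, MemLp (f i) 2 μ) (hg : MemLp g 2 μ) :
    covFun μ (fun ω => ∑ i ∈ s, f i ω) g = ∑ i ∈ s, covFun μ (f i) g := by
  classical
  induction s using Finset.induction_on with
  | empty => simpa using covFun_const (μ := μ) 0 g
  | insert a s hnotmem ih =>
    have ha := hf a (Finset.mem_insert_self a s)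
    have hs : ∀ i ∈ s, MemLp (f i) 2 μ := fun i hi => hf i (Finset.mem_insert_of_mem hi)
    have hsum : MemLp (fun ω => ∑ i ∈ s, f i ω) 2 μ := by
      exact memLp_finset_sum s hs
    have h : (fun ω => ∑ i ∈ insert a s, f i ω) =
        f a + fun ω => ∑ i ∈ s, f i ω := by
      funext ω; simp [Finset.sum_insert hnotmem]
    rw [h, covFun_add_left ha hsum hg, ih hs, Finset.sum_insert hnotmem]

end Aux

/-- Kálmán's covariance formula: the covariance of the assimilated random vector
`x_a = x_f + K(ŷ − z)` is `C_{x_a} = C_{x_f} − C_{x_f z} C_z⁻¹ C_{x_f z}ᵀ = C_{x_f} − K C_{x_f z}ᵀ`. -/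
theorem kalman_covariance_formula
    {Ω : Type*} [MeasurableSpace Ω] (ℙ : Measure Ω) [IsProbabilityMeasure ℙ]
    {M I : ℕ} (x_f : Ω → Fin M → ℝ) (z : Ω → Fin I → ℝ)
    (hx : ∀ m, MemLp (fun ω => x_f ω m) 2 ℙ) (hz : ∀ i, MemLp (fun ω => z ω i) 2 ℙ)
    (hCz : IsUnit (covMatrix ℙ z z))
    (yhat : Fin I → ℝ)
    (K : Matrix (Fin M) (Fin I) ℝ) (hK : K = covMatrix ℙ x_f z * (covMatrix ℙ z z)⁻¹)
    (x_a : Ω → Fin M → ℝ) (hxa : x_a = fun ω => x_f ω + K.mulVec (yhat - z ω)) :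
    covMatrix ℙ x_a x_a =
        covMatrix ℙ x_f x_f -
          covMatrix ℙ x_f z * (covMatrix ℙ z z)⁻¹ * (covMatrix ℙ x_f z)ᵀ ∧
      covMatrix ℙ x_a x_a = covMatrix ℙ x_f x_f - K * (covMatrix ℙ x_f z)ᵀ := by
  classical
  set A := covMatrix ℙ x_f z with hA
  set S := covMatrix ℙ z z with hS
  set Cx := covMatrix ℙ x_f x_f with hCx
  -- decomposition of x_a components
  have hxa' : ∀ m, (fun ω => x_a ω m) =
      (fun ω => x_f ω m) + fun ω => ∑ i, ((-(K m i)) * z ω i + K m i * yhat i) := by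
    intro m
    funext ω
    simp only [hxa, Pi.add_apply, Matrix.mulVec, dotProduct, Pi.sub_apply]
    rw [add_right_inj]
    exact Finset.sum_congr rfl fun i _ => by ring
  have hterm : ∀ m i, MemLp (fun ω => (-(K m i)) * z ω i + K m i * yhat i) 2 ℙ := by
    intro m i
    exact (((hz i).const_mul _).add (memLp_const _))
  have hxam : ∀ m, MemLp (fun ω => x_a ω m) 2 ℙ := by
    intro m
    rw [hxa' m]
    exact (hx m).add (memLp_finset_sum _ fun i _ => hterm m i)
  -- covFun expansion for x_a in the first slot
  have expand : ∀ (m : Fin M) (h : Ω → ℝ), MemLp h 2 ℙ →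
      covFun ℙ (fun ω => x_a ω m) h =
        covFun ℙ (fun ω => x_f ω m) h - ∑ i, K m i * covFun ℙ (fun ω => z ω i) h := by
    intro m h hh
    rw [hxa' m, covFun_add_left (hx m) (memLp_finset_sum _ fun i _ => hterm m i) hh,
      covFun_sum_left _ (fun i _ => hterm m i) hh]
    have : ∀ i, covFun ℙ (fun ω => (-(K m i)) * z ω i + K m i * yhat i) h =
        (-(K m i)) * covFun ℙ (fun ω => z ω i) h := fun i =>
      covFun_affine _ _ (hz i) hh
    simp_rw [this, neg_mul]
    rw [Finset.sum_neg_distrib]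
    ring
  -- identify covMatrix entries with covFun
  have hAent : ∀ m i, A m i = covFun ℙ (fun ω => x_f ω m) (fun ω => z ω i) := fun m i => rfl
  have hSent : ∀ i j, S i j = covFun ℙ (fun ω => z ω i) (fun ω => z ω j) := fun i j => rfl
  have hCxent : ∀ m m', Cx m m' = covFun ℙ (fun ω => x_f ω m) (fun ω => x_f ω m') :=
    fun m m' => rfl
  -- Step A: covMatrix x_a x_a = Cx - A Kᵀ - K Aᵀ + K S Kᵀ
  have stepA : covMatrix ℙ x_a x_a = Cx - A * Kᵀ - K * Aᵀ + K * S * Kᵀ := by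
    ext m m'
    have e1 : covMatrix ℙ x_a x_a m m' = covFun ℙ (fun ω => x_a ω m) (fun ω => x_a ω m') := rfl
    have c1 : covFun ℙ (fun ω => x_f ω m') (fun ω => x_f ω m) = Cx m m' := by
      rw [hCxent m m']; exact covFun_comm _ _
    have c2 : ∀ j, covFun ℙ (fun ω => z ω j) (fun ω => x_f ω m) = A m j := fun j => by
      rw [hAent m j]; exact covFun_comm _ _
    have e2 : covFun ℙ (fun ω => x_f ω m) (fun ω => x_a ω m') =
        Cx m m' - ∑ j, K m' j * A m j := by
      rw [covFun_comm, expand m' _ (hx m), c1]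
      simp_rw [c2]
    have e3 : ∀ i, covFun ℙ (fun ω => z ω i) (fun ω => x_a ω m') =
        A m' i - ∑ j, K m' j * S j i := by
      intro i
      rw [covFun_comm, expand m' _ (hz i)]
      rfl
    rw [e1, expand m _ (hxam m'), e2]
    simp_rw [e3]
    simp only [Matrix.add_apply, Matrix.sub_apply, Matrix.mul_apply, Matrix.transpose_apply]
    have hthis : ∀ i, K m i * (A m' i - ∑ j, K m' j * S j i) =
        K m i * A m' i - ∑ j, K m i * S i j * K m' j := by
      intro i
      rw [mul_sub, Finset.mul_sum]
      congr 1
      refine Finset.sum_congr rfl fun j _ => ?_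
      have hsymm : S j i = S i j := by
        rw [hSent, hSent]; exact covFun_comm _ _
      rw [hsymm]; ring
    simp_rw [hthis]
    have h4 : ∑ i, ∑ j, K m i * S i j * K m' j = ∑ j, (∑ i, K m i * S i j) * K m' j := by
      rw [Finset.sum_comm]
      simp_rw [Finset.sum_mul]
    rw [Finset.sum_sub_distrib, h4]
    have g1 : ∑ j, K m' j * A m j = ∑ j, A m j * K m' j :=
      Finset.sum_congr rfl fun j _ => mul_comm _ _
    rw [g1]
    ring
  -- Matrix algebra
  have hdet : IsUnit S.det := (Matrix.isUnit_iff_isUnit_det S).mp hCz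
  have hSsymm : Sᵀ = S := by
    ext i j
    simp only [Matrix.transpose_apply, hSent]
    exact covFun_comm _ _
  have hKT : Kᵀ = S⁻¹ * Aᵀ := by
    rw [hK, Matrix.transpose_mul, Matrix.transpose_nonsing_inv, hSsymm]
  have h1 : A * Kᵀ = A * S⁻¹ * Aᵀ := by rw [hKT, Matrix.mul_assoc]
  have h2 : K * Aᵀ = A * S⁻¹ * Aᵀ := by rw [hK]
  have h3 : K * S * Kᵀ = A * S⁻¹ * Aᵀ := by
    rw [hKT, hK, Matrix.mul_assoc (A * S⁻¹) S (S⁻¹ * Aᵀ), ← Matrix.mul_assoc S S⁻¹ Aᵀ,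
      Matrix.mul_nonsing_inv S hdet, Matrix.one_mul, Matrix.mul_assoc]
  have main : covMatrix ℙ x_a x_a = Cx - A * S⁻¹ * Aᵀ := by
    rw [stepA, h1, h2, h3]; abel
  refine ⟨main, ?_⟩
  rw [main, hK, Matrix.mul_assoc]
end

section
/- (Exactness of the linear filter in the Gaussian case, conditional-mean form) Let x, ε : Ω → ℝ be independent random variables such that the law of x is the Gaussian measure with mean m and variance σ_x² > 0 and the law of ε is the Gaussian measure with mean 0 and variance σ_ε² > 0. Set z := x + ε. Then the conditional expectation of x given σ(z) is the affine function of the observation given by the Kálmán gain: E[x|σ(z)](ω) = m + (σ_x²/(σ_x² + σ_ε²))·(z(ω) − m) for ℙ-almost every ω. -/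
open MeasureTheory ProbabilityTheory Real


section helpers
lemma integral_gaussianReal_eq (m0 : ℝ) {v : NNReal} (hv : v ≠ 0) (f : ℝ → ℝ) :
    ∫ u, f u ∂(gaussianReal m0 v) = ∫ u, gaussianPDFReal m0 v u * f u := by
  rw [gaussianReal_of_var_ne_zero _ hv]
  have : (gaussianPDF m0 v) = fun u => ((gaussianPDFReal m0 v u).toNNReal : ENNReal) := by
    ext u; simp [gaussianPDF, ENNReal.ofReal]
  rw [this, integral_withDensity_eq_integral_smul
    ((measurable_gaussianPDFReal m0 v).real_toNNReal) f]
  congr 1; ext u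
  simp [NNReal.smul_def, Real.coe_toNNReal _ (gaussianPDFReal_nonneg m0 v u)]

lemma integrable_gaussianReal_iff (m0 : ℝ) {v : NNReal} (hv : v ≠ 0) {f : ℝ → ℝ} :
    Integrable f (gaussianReal m0 v) ↔
      Integrable (fun u => f u * gaussianPDFReal m0 v u) volume := by
  rw [gaussianReal_of_var_ne_zero _ hv,
    integrable_withDensity_iff (measurable_gaussianPDF m0 v)
      (Filter.Eventually.of_forall fun u => ENNReal.ofReal_lt_top)]
  congr! 2 with u
  simp [gaussianPDF, ENNReal.toReal_ofReal (gaussianPDFReal_nonneg m0 v u)]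

lemma integrable_sub_mul_pdf (m0 : ℝ) {v : NNReal} (hv : 0 < v) :
    Integrable (fun u => (u - m0) * gaussianPDFReal m0 v u) volume := by
  have hb : (0:ℝ) < (2 * (v:ℝ))⁻¹ := by positivity
  have h := ((integrable_mul_exp_neg_mul_sq hb).const_mul (√(2 * π * v))⁻¹).comp_sub_right m0
  refine h.congr (Filter.Eventually.of_forall fun u => ?_)
  simp only [gaussianPDFReal]
  rw [show -(2*(v:ℝ))⁻¹ * (u-m0)^2 = -(u-m0)^2/(2*(v:ℝ)) by ring]
  ring

lemma integrable_abs_sub_mul_pdf (m0 : ℝ) {v : NNReal} (hv : 0 < v) :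
    Integrable (fun u => |u - m0| * gaussianPDFReal m0 v u) volume := by
  refine (integrable_sub_mul_pdf m0 hv).abs.congr (Filter.Eventually.of_forall fun u => ?_)
  simp only []
  rw [abs_mul, abs_of_nonneg (gaussianPDFReal_nonneg _ _ _)]

lemma integrable_id_gaussianReal (m0 : ℝ) {v : NNReal} (hv : 0 < v) :
    Integrable (fun u => u) (gaussianReal m0 v) := by
  rw [integrable_gaussianReal_iff m0 hv.ne']
  refine ((integrable_sub_mul_pdf m0 hv).add
    ((integrable_gaussianPDFReal m0 v).const_mul m0)).congr
    (Filter.Eventually.of_forall fun u => ?_)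
  simp only [Pi.add_apply]
  ring

lemma integrable_abs_sub_gaussianReal (m0 : ℝ) {v : NNReal} (hv : 0 < v) :
    Integrable (fun u => |u - m0|) (gaussianReal m0 v) := by
  rw [integrable_gaussianReal_iff m0 hv.ne']
  exact integrable_abs_sub_mul_pdf m0 hv

lemma pdf_sym (m : ℝ) (sx se : NNReal) (hsx : 0 < sx) (hse : 0 < se) (w u : ℝ) :
    gaussianPDFReal m sx (2*(m + (sx:ℝ)/((sx:ℝ)+(se:ℝ))*(w-m)) - u) *
      gaussianPDFReal 0 se (w - (2*(m + (sx:ℝ)/((sx:ℝ)+(se:ℝ))*(w-m)) - u))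
    = gaussianPDFReal m sx u * gaussianPDFReal 0 se (w - u) := by
  have h1 : (sx:ℝ) ≠ 0 := by exact_mod_cast hsx.ne'
  have h2 : (se:ℝ) ≠ 0 := by exact_mod_cast hse.ne'
  have h3 : (sx:ℝ) + (se:ℝ) ≠ 0 := by positivity
  simp only [gaussianPDFReal]
  rw [mul_mul_mul_comm]
  conv_rhs => rw [mul_mul_mul_comm]
  rw [← Real.exp_add, ← Real.exp_add]
  congr 1
  congr 1
  field_simp
  ring
end helpers

lemma prod_integral_zero (m : ℝ) (sx se : NNReal) (hsx : 0 < sx) (hse : 0 < se)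
    {A : Set ℝ} (hA : MeasurableSet A) :
    ∫ z : ℝ × ℝ, (A.indicator (fun _ => (1:ℝ)) (z.1 + z.2)) *
        (m + (sx:ℝ)/((sx:ℝ)+(se:ℝ)) * (z.1 + z.2 - m) - z.1)
      ∂((gaussianReal m sx).prod (gaussianReal 0 se)) = 0 := by
  set c : ℝ := (sx:ℝ)/((sx:ℝ)+(se:ℝ)) with hc
  set p : ℝ → ℝ := gaussianPDFReal m sx with hp
  set q : ℝ → ℝ := gaussianPDFReal 0 se with hq
  set Φ : ℝ × ℝ → ℝ := fun z =>
    (A.indicator (fun _ => (1:ℝ)) (z.1 + z.2)) * (m + c * (z.1 + z.2 - m) - z.1) with hΦ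
  have hse' : ((0:ℝ):ℝ) < (se:ℝ) := by exact_mod_cast hse
  have hsx' : (0:ℝ) < (sx:ℝ) := by exact_mod_cast hsx
  have hc0 : 0 ≤ c := by positivity
  have hc1 : c ≤ 1 := by
    rw [hc, div_le_one (by positivity)]; linarith
  have hind : ∀ t : ℝ, |A.indicator (fun _ => (1:ℝ)) t| ≤ 1 := by
    intro t; by_cases h : t ∈ A <;> simp [h]
  have hboundΦ : ∀ z : ℝ × ℝ, |Φ z| ≤ |z.1 - m| + |z.2| := by
    intro z
    rw [hΦ]
    simp only []
    rw [abs_mul]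
    have h1 : |m + c * (z.1 + z.2 - m) - z.1| ≤ |z.1 - m| + |z.2| := by
      have : m + c * (z.1 + z.2 - m) - z.1 = c * z.2 - (1 - c) * (z.1 - m) := by ring
      rw [this, sub_eq_add_neg]
      refine (abs_add_le _ _).trans ?_
      rw [abs_neg, abs_mul, abs_mul, abs_of_nonneg hc0, abs_of_nonneg (by linarith : 0 ≤ 1 - c)]
      nlinarith [abs_nonneg z.2, abs_nonneg (z.1 - m)]
    calc |A.indicator (fun _ => (1:ℝ)) (z.1+z.2)| * |m + c * (z.1 + z.2 - m) - z.1|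
        ≤ 1 * |m + c * (z.1 + z.2 - m) - z.1| :=
          mul_le_mul_of_nonneg_right (hind _) (abs_nonneg _)
      _ = |m + c * (z.1 + z.2 - m) - z.1| := one_mul _
      _ ≤ |z.1 - m| + |z.2| := h1
  have mΦ : Measurable Φ := by
    apply Measurable.mul
    · exact (measurable_const.indicator hA).comp (measurable_fst.add measurable_snd)
    · fun_prop
  -- integrability on the product of the Gaussians
  have hμ1 : Integrable (fun z : ℝ × ℝ => |z.1 - m|)
      ((gaussianReal m sx).prod (gaussianReal 0 se)) := by
    have := (integrable_abs_sub_gaussianReal m hsx).mul_prod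
      (integrable_const (1:ℝ) (μ := gaussianReal 0 se))
    simpa using this
  have hμ2 : Integrable (fun z : ℝ × ℝ => |z.2|)
      ((gaussianReal m sx).prod (gaussianReal 0 se)) := by
    have := (integrable_const (1:ℝ) (μ := gaussianReal m sx)).mul_prod
      (integrable_abs_sub_gaussianReal 0 hse)
    simpa using this
  have hΦint : Integrable Φ ((gaussianReal m sx).prod (gaussianReal 0 se)) := by
    refine Integrable.mono' (hμ1.add hμ2) mΦ.aestronglyMeasurable
      (Filter.Eventually.of_forall fun z => ?_)
    simpa [Real.norm_eq_abs, sub_zero] using hboundΦ z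
  rw [integral_prod _ hΦint]
  -- convert the inner integral to a Lebesgue integral over w = u + v
  have inner_eq : ∀ u : ℝ, ∫ v, Φ (u, v) ∂(gaussianReal 0 se)
      = ∫ w, q (w - u) * Φ (u, w - u) := by
    intro u
    rw [integral_gaussianReal_eq 0 hse.ne' (fun v => Φ (u, v))]
    exact (integral_sub_right_eq_self (fun w => q w * Φ (u, w)) u).symm
  simp_rw [inner_eq]
  rw [integral_gaussianReal_eq m hsx.ne']
  simp_rw [← integral_const_mul]
  -- key integrability over Lebesgue on ℝ × ℝ to allow swapping
  have hcomp : Integrable (fun z : ℝ × ℝ => p z.1 * (q z.2 * Φ z)) (volume.prod volume) := by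
    have hb : Integrable (fun z : ℝ × ℝ =>
        (|z.1 - m| * p z.1) * q z.2 + p z.1 * (|z.2| * q z.2)) (volume.prod volume) := by
      exact ((integrable_abs_sub_mul_pdf m hsx).mul_prod (integrable_gaussianPDFReal 0 se)).add
        ((integrable_gaussianPDFReal m sx).mul_prod (by simpa using integrable_abs_sub_mul_pdf 0 hse))
    refine Integrable.mono' hb ?_ (Filter.Eventually.of_forall fun z => ?_)
    · exact ((measurable_gaussianPDFReal m sx).comp measurable_fst).mul
        (((measurable_gaussianPDFReal 0 se).comp measurable_snd).mul mΦ) |>.aestronglyMeasurable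
    · have h1 : 0 ≤ p z.1 := gaussianPDFReal_nonneg _ _ _
      have h2 : 0 ≤ q z.2 := gaussianPDFReal_nonneg _ _ _
      have h3 := hboundΦ z
      have habs : |Φ z| * (p z.1 * q z.2) ≤ (|z.1 - m| + |z.2|) * (p z.1 * q z.2) :=
        mul_le_mul_of_nonneg_right h3 (by positivity)
      rw [Real.norm_eq_abs, abs_mul, abs_mul, abs_of_nonneg h1, abs_of_nonneg h2]
      nlinarith [abs_nonneg (Φ z)]
  have hH : Integrable (fun z : ℝ × ℝ => p z.1 * (q (z.2 - z.1) * Φ (z.1, z.2 - z.1)))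
      (volume.prod volume) := by
    have hmp : MeasurePreserving (⇑(MeasurableEquiv.shearAddRight ℝ))
        ((volume : Measure ℝ).prod volume) (volume.prod volume) :=
      measurePreserving_prod_add volume volume
    have := (hmp.integrable_comp_emb
      (MeasurableEquiv.shearAddRight ℝ).measurableEmbedding
      (g := fun z : ℝ × ℝ => p z.1 * (q (z.2 - z.1) * Φ (z.1, z.2 - z.1))))
    rw [← this]
    refine hcomp.congr (Filter.Eventually.of_forall fun z => ?_)
    show p z.1 * (q z.2 * Φ z) = p z.1 * (q (z.1 + z.2 - z.1) * Φ (z.1, z.1 + z.2 - z.1))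
    simp
  rw [integral_integral_swap (f := fun u w => p u * (q (w - u) * Φ (u, w - u))) hH]
  -- the inner integral in u vanishes for every w
  have hz : ∀ w : ℝ, ∫ u, p u * (q (w - u) * Φ (u, w - u)) = 0 := by
    intro w
    have heq : (fun u => p u * (q (w - u) * Φ (u, w - u)))
        = fun u => A.indicator (fun _ => (1:ℝ)) w *
            ((m + c * (w - m) - u) * (p u * q (w - u))) := by
      funext u
      rw [hΦ]
      simp only []
      rw [show u + (w - u) = w by ring]
      ring
    rw [heq, integral_const_mul]
    have hzero : ∫ u, (m + c * (w - m) - u) * (p u * q (w - u)) = 0 := by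
      set g : ℝ → ℝ := fun u => (m + c * (w - m) - u) * (p u * q (w - u)) with hg
      have h2 : ∫ u, g (2 * (m + c * (w - m)) - u) = ∫ u, g u :=
        integral_sub_left_eq_self g volume (2 * (m + c * (w - m)))
      have h3 : ∀ u, g (2 * (m + c * (w - m)) - u) = - g u := by
        intro u
        rw [hg]
        simp only []
        rw [hp, hq, hc]
        rw [pdf_sym m sx se hsx hse w u]
        ring
      simp_rw [h3, integral_neg] at h2
      linarith
    rw [hzero, mul_zero]
  simp_rw [hz]
  simp

/-- Exactness of the linear filter in the Gaussian case (conditional-mean form):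
for independent Gaussians `x ~ N(m, σ_x²)` and `ε ~ N(0, σ_ε²)` and `z = x + ε`,
`E[x|σ(z)] = m + (σ_x²/(σ_x² + σ_ε²))·(z − m)` almost surely. -/
theorem gaussian_conditional_mean_is_affine
    {Ω : Type*} {𝒜 : MeasurableSpace Ω} (P : Measure Ω) [IsProbabilityMeasure P]
    (x ε : Ω → ℝ) (hx : Measurable x) (hε : Measurable ε)
    (hindep : IndepFun x ε P)
    (m : ℝ) (sx se : NNReal) (hsx : 0 < sx) (hse : 0 < se)
    (hlawx : Measure.map x P = gaussianReal m sx)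
    (hlawε : Measure.map ε P = gaussianReal 0 se)
    (z : Ω → ℝ) (hz : z = x + ε) :
    P[x | MeasurableSpace.comap z inferInstance] =ᵐ[P]
      fun ω => m + ((sx : ℝ) / ((sx : ℝ) + (se : ℝ))) * (z ω - m) := by
  subst hz
  set c : ℝ := (sx:ℝ)/((sx:ℝ)+(se:ℝ)) with hc
  have hzm : Measurable (x + ε) := hx.add hε
  have hm : MeasurableSpace.comap (x + ε) inferInstance ≤ 𝒜 := hzm.comap_le
  have hxint : Integrable x P := by
    have h := (integrable_map_measure aestronglyMeasurable_id hx.aemeasurable).mp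
      (by rw [hlawx]; exact integrable_id_gaussianReal m hsx)
    exact h
  have hεint : Integrable ε P := by
    have h := (integrable_map_measure aestronglyMeasurable_id hε.aemeasurable).mp
      (by rw [hlawε]; exact integrable_id_gaussianReal 0 hse)
    exact h
  set g : Ω → ℝ := fun ω => m + c * ((x + ε) ω - m) with hg
  have hgint : Integrable g P := by
    refine (integrable_const m).add ((((hxint.add hεint).sub (integrable_const m)).const_mul c).congr
      (Filter.Eventually.of_forall fun ω => ?_))
    simp [mul_comm]
  refine (ae_eq_condExp_of_forall_setIntegral_eq hm hxint
    (fun s _ _ => hgint.integrableOn) ?_ ?_).symm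
  · rintro s ⟨A, hA, rfl⟩ -
    have hsm : MeasurableSet ((x + ε) ⁻¹' A) := hzm hA
    set Φ : ℝ × ℝ → ℝ := fun pr =>
      (A.indicator (fun _ => (1:ℝ)) (pr.1 + pr.2)) * (m + c * (pr.1 + pr.2 - m) - pr.1) with hΦ
    have mΦ : Measurable Φ := by
      apply Measurable.mul
      · exact (measurable_const.indicator hA).comp (measurable_fst.add measurable_snd)
      · fun_prop
    have hT : Measurable (fun ω => (x ω, ε ω)) := hx.prodMk hε
    have hmap : Measure.map (fun ω => (x ω, ε ω)) P
        = (gaussianReal m sx).prod (gaussianReal 0 se) := by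
      rw [← hlawx, ← hlawε]
      exact (indepFun_iff_map_prod_eq_prod_map_map hx.aemeasurable hε.aemeasurable).mp hindep
    have key : ∫ ω in (x + ε) ⁻¹' A, (g ω - x ω) ∂P = 0 := by
      have h1 : ∫ ω in (x + ε) ⁻¹' A, (g ω - x ω) ∂P
          = ∫ ω, Φ (x ω, ε ω) ∂P := by
        rw [← integral_indicator hsm]
        congr 1
        funext ω
        by_cases h : x ω + ε ω ∈ A
        · have h' : ω ∈ (x + ε) ⁻¹' A := by simpa [Set.mem_preimage] using h
          rw [Set.indicator_of_mem h']
          rw [hΦ]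
          simp only [Set.indicator_of_mem h]
          rw [hg]
          simp only [Pi.add_apply]
          ring
        · have h' : ω ∉ (x + ε) ⁻¹' A := by simpa [Set.mem_preimage] using h
          rw [Set.indicator_of_notMem h']
          rw [hΦ]
          simp [Set.indicator_of_notMem h]
      rw [h1, ← integral_map hT.aemeasurable mΦ.aestronglyMeasurable, hmap]
      exact prod_integral_zero m sx se hsx hse hA
    rw [integral_sub hgint.integrableOn hxint.integrableOn] at key
    linarith
  · have hzc : Measurable[MeasurableSpace.comap (x + ε) inferInstance] (x + ε) :=
      measurable_iff_comap_le.mpr le_rfl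
    exact (Measurable.stronglyMeasurable
      (measurable_const.add ((hzc.sub measurable_const).const_mul c))).aestronglyMeasurable
end
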